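/- arXiv:1711.03132 — 4 statements merged into one kernel-verified Lean document; each statement's English description precedes it below -/
import Mathlib

section
/- Every group homomorphism from a Polish topological group to the integers ℤ (with the discrete topology) is continuous. -/
open Filter Topology

section DudleyAux

variable {G : Type*} [Group G]

/-- Finite-depth approximations to Dudley's infinite product
`y N = h N * (y (N+1)) ^ (φ (h N) + 2)`. -/
private noncomputable def dudleyW (φ : G → ℤ) (h : ℕ → G) : ℕ → ℕ → G
  | N, 0 => h N
  | N, k + 1 => h N * dudleyW φ h (N + 1) k ^ ((φ (h N)).toNat + 2)

private lemma dudleyW_congr (φ : G → ℤ) {h1 h2 : ℕ → G} :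
    ∀ (k N : ℕ), (∀ i, N ≤ i → i ≤ N + k → h1 i = h2 i) →
      dudleyW φ h1 N k = dudleyW φ h2 N k
  | 0, N, H => H N le_rfl (by omega)
  | k + 1, N, H => by
      have hN : h1 N = h2 N := H N le_rfl (by omega)
      have ih := dudleyW_congr φ k (N + 1) (fun i hi1 hi2 => H i (by omega) (by omega))
      simp only [dudleyW, hN, ih]

private lemma dudleyW_leaf_one (φ : G → ℤ) (h : ℕ → G) :
    ∀ (k N : ℕ), h (N + k + 1) = 1 → dudleyW φ h N (k + 1) = dudleyW φ h N k
  | 0, N, H => by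
      simp only [dudleyW]
      rw [show N + 0 + 1 = N + 1 by omega] at H
      simp [H]
  | k + 1, N, H => by
      have ih := dudleyW_leaf_one φ h k (N + 1) (by rw [show N + 1 + k + 1 = N + (k+1) + 1 by omega]; exact H)
      simp only [dudleyW] at ih ⊢
      rw [ih]

private lemma dudleyW_continuous [TopologicalSpace G] [IsTopologicalGroup G]
    (φ : G → ℤ) (f : ℕ → G) (m : ℕ) :
    ∀ (k N : ℕ), N + k ≤ m →
      Continuous fun g : G => dudleyW φ (Function.update f m g) N k
  | 0, N, _ => by
      by_cases hN : N = m
      · subst hN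
        simpa only [dudleyW, Function.update_self] using continuous_id'
      · simp only [dudleyW, Function.update_of_ne hN]
        exact continuous_const
  | k + 1, N, H => by
      have hNm : N ≠ m := by omega
      have ih := dudleyW_continuous φ f m k (N + 1) (by omega)
      simp only [dudleyW, Function.update_of_ne hNm]
      exact continuous_const.mul (ih.pow _)

/-- In each step of Dudley's construction one can choose a new group element `g` with
`φ g ≥ 2` which changes the finite products only slightly. -/
private lemma dudley_exists_step [MetricSpace G] [IsTopologicalGroup G]
    (φ : G → ℤ) (hφ : ∀ a b : G, φ (a * b) = φ a + φ b)
    (hd : ∀ U ∈ 𝓝 (1 : G), ∃ x ∈ U, φ x ≠ 0) (f : ℕ → G) (m : ℕ) :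
    ∃ g : G, 2 ≤ φ g ∧ ∀ N, N < m →
      dist (dudleyW φ (Function.update f m g) N (m - N))
        (dudleyW φ f N (m - N - 1)) < (2 : ℝ)⁻¹ ^ m := by
  have hone : φ 1 = 0 := by have h1 := hφ 1 1; simp only [one_mul] at h1; omega
  -- each single distance condition holds eventually near 1
  have hev : ∀ N, N < m → ∀ᶠ g in 𝓝 (1 : G),
      dist (dudleyW φ (Function.update f m g) N (m - N))
        (dudleyW φ f N (m - N - 1)) < (2 : ℝ)⁻¹ ^ m := by
    intro N hN
    have hc : Continuous fun g : G => dudleyW φ (Function.update f m g) N (m - N) :=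
      dudleyW_continuous φ f m (m - N) N (by omega)
    have h1 : dudleyW φ (Function.update f m (1 : G)) N (m - N) =
        dudleyW φ f N (m - N - 1) := by
      have hk : m - N = (m - N - 1) + 1 := by omega
      rw [hk, dudleyW_leaf_one φ _ _ N
        (by rw [show N + (m - N - 1) + 1 = m by omega]; simp)]
      exact dudleyW_congr φ _ N (fun i hi1 hi2 =>
        Function.update_of_ne (by omega) _ _)
    have h3 : Tendsto
        (fun g : G => dist (dudleyW φ (Function.update f m g) N (m - N))
          (dudleyW φ f N (m - N - 1))) (𝓝 1) (𝓝 0) := by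
      have hcd : Continuous (fun g : G => dist
          (dudleyW φ (Function.update f m g) N (m - N))
          (dudleyW φ f N (m - N - 1))) :=
        hc.dist continuous_const
      have := hcd.tendsto (1 : G)
      simpa [h1] using this
    have hpos : (0 : ℝ) < (2 : ℝ)⁻¹ ^ m := by positivity
    have := h3 (Iio_mem_nhds hpos)
    filter_upwards [this] with g hg using hg
  have hall : ∀ᶠ g in 𝓝 (1 : G), ∀ N ∈ Set.Iio m,
      dist (dudleyW φ (Function.update f m g) N (m - N))
        (dudleyW φ f N (m - N - 1)) < (2 : ℝ)⁻¹ ^ m :=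
    (Filter.eventually_all_finite (Set.finite_Iio m)).2
      (fun N hN => hev N hN)
  -- split the neighborhood
  obtain ⟨V, hV, hVmul⟩ := exists_nhds_one_split hall
  have hVinv : (fun x : G => x⁻¹) ⁻¹' V ∈ 𝓝 (1 : G) :=
    (continuous_inv.continuousAt (x := (1 : G))).preimage_mem_nhds (by simpa using hV)
  obtain ⟨x, hx, hxφ⟩ := hd (V ∩ (fun x : G => x⁻¹) ⁻¹' V) (Filter.inter_mem hV hVinv)
  have hxinv : φ x⁻¹ = -φ x := by
    have := hφ x x⁻¹; simp only [mul_inv_cancel, hone] at this; omega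
  rcases le_or_gt 1 (φ x) with hx1 | hx1
  · refine ⟨x * x, by rw [hφ]; omega, ?_⟩
    intro N hN
    exact hVmul x hx.1 x hx.1 N hN
  · have hx2 : φ x ≤ -1 := by omega
    refine ⟨x⁻¹ * x⁻¹, by rw [hφ, hxinv]; omega, ?_⟩
    intro N hN
    exact hVmul x⁻¹ hx.2 x⁻¹ hx.2 N hN

/-- The purely arithmetic heart: there is no pair of integer sequences with
`t n ≥ 2` and `c n = t n + (t n + 2) * c (n+1)`. -/
private lemma dudley_int_false (c t : ℕ → ℤ) (ht : ∀ n, 2 ≤ t n)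
    (hrec : ∀ n, c n = t n + (t n + 2) * c (n + 1)) : False := by
  have hne : ∀ n, c n ≠ 0 := by
    intro n hn
    have h := hrec n
    have h2 := ht n
    rcases le_or_gt (c (n + 1)) (-1) with h1 | h1
    · nlinarith
    · have h1' : 0 ≤ c (n + 1) := by omega
      nlinarith
  have hlt : ∀ n, (c (n + 1)).natAbs < (c n).natAbs := by
    intro n
    have h := hrec n
    have h2 := ht n
    have h3 := hne (n + 1)
    rcases le_or_gt 1 (c (n + 1)) with h1 | h1
    · have ha : c (n + 1) + 1 ≤ c n := by nlinarith
      omega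
    · have h1' : c (n + 1) ≤ -1 := by omega
      have ha : c n ≤ c (n + 1) - 1 := by nlinarith
      omega
  have hdesc : ∀ n, (c n).natAbs + n ≤ (c 0).natAbs := by
    intro n
    induction n with
    | zero => omega
    | succ k ih => have := hlt k; omega
  have := hdesc ((c 0).natAbs + 1)
  omega

/-- If a homomorphism to `ℤ` from a Polish group is nonzero on every neighborhood of `1`,
we get a contradiction. -/
private lemma dudley_discont_false {G : Type*} [Group G] [TopologicalSpace G]
    [IsTopologicalGroup G] [PolishSpace G] (φ : G → ℤ)
    (hφ : ∀ a b : G, φ (a * b) = φ a + φ b)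
    (hd : ∀ U ∈ 𝓝 (1 : G), ∃ x ∈ U, φ x ≠ 0) : False := by
  letI := TopologicalSpace.upgradeIsCompletelyMetrizable G
  have hone : φ 1 = 0 := by have h1 := hφ 1 1; simp only [one_mul] at h1; omega
  have hpow : ∀ (b : G) (n : ℕ), φ (b ^ n) = n * φ b := by
    intro b n
    induction n with
    | zero => simpa using hone
    | succ k ih => rw [pow_succ, hφ, ih]; push_cast; ring
  -- recursively chosen sequence
  let F : ℕ → (ℕ → G) := fun m => Nat.rec (fun _ => 1)
    (fun m f => Function.update f m
      (Classical.choose (dudley_exists_step φ hφ hd f m))) m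
  have hF_succ : ∀ m, F (m + 1) = Function.update (F m) m
      (Classical.choose (dudley_exists_step φ hφ hd (F m) m)) := fun m => rfl
  set h : ℕ → G := fun m => F (m + 1) m with hh
  have hFh : ∀ m n, n < m → F m n = h n := by
    intro m
    induction m with
    | zero => omega
    | succ k ih =>
      intro n hn
      rcases Nat.lt_succ_iff_lt_or_eq.1 hn with hn' | rfl
      · rw [hF_succ, Function.update_of_ne (by omega), ih n hn']
      · rfl
  have hspec : ∀ m, 2 ≤ φ (h m) ∧ ∀ N, N < m →
      dist (dudleyW φ h N (m - N)) (dudleyW φ h N (m - N - 1)) < (2 : ℝ)⁻¹ ^ m := by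
    intro m
    obtain ⟨hg1, hg2⟩ := Classical.choose_spec (dudley_exists_step φ hφ hd (F m) m)
    have hupd : Function.update (F m) m
        (Classical.choose (dudley_exists_step φ hφ hd (F m) m)) = F (m + 1) :=
      (hF_succ m).symm
    have hhm : h m = Classical.choose (dudley_exists_step φ hφ hd (F m) m) := by
      rw [hh]; simp only [hF_succ, Function.update_self]
    constructor
    · rw [hhm]; exact hg1
    · intro N hN
      have e1 : dudleyW φ (Function.update (F m) m
          (Classical.choose (dudley_exists_step φ hφ hd (F m) m))) N (m - N) =
          dudleyW φ h N (m - N) := by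
        rw [hupd]
        exact dudleyW_congr φ _ N (fun i hi1 hi2 => hFh (m + 1) i (by omega))
      have e2 : dudleyW φ (F m) N (m - N - 1) = dudleyW φ h N (m - N - 1) :=
        dudleyW_congr φ _ N (fun i hi1 hi2 => hFh m i (by omega))
      have := hg2 N hN
      rwa [e1, e2] at this
  -- Cauchy sequences and limits
  have hy : ∀ N, ∃ y : G, Tendsto (fun k => dudleyW φ h N k) atTop (𝓝 y) := by
    intro N
    refine cauchySeq_tendsto_of_complete ?_
    refine cauchySeq_of_le_geometric (2 : ℝ)⁻¹ ((2 : ℝ)⁻¹ ^ (N + 1)) (by norm_num) ?_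
    intro k
    have := (hspec (N + k + 1)).2 N (by omega)
    rw [show N + k + 1 - N = k + 1 by omega, show k + 1 - 1 = k by omega] at this
    rw [dist_comm]
    calc dist (dudleyW φ h N (k + 1)) (dudleyW φ h N k) ≤ (2 : ℝ)⁻¹ ^ (N + k + 1) :=
          le_of_lt this
      _ = (2 : ℝ)⁻¹ ^ (N + 1) * (2 : ℝ)⁻¹ ^ k := by ring
  choose y hy using hy
  -- the recurrence for the limits
  have hrel : ∀ N, y N = h N * y (N + 1) ^ ((φ (h N)).toNat + 2) := by
    intro N
    have h1 : Tendsto (fun k => dudleyW φ h N (k + 1)) atTop (𝓝 (y N)) :=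
      (hy N).comp (tendsto_add_atTop_nat 1)
    have h2 : Tendsto (fun k => h N * dudleyW φ h (N + 1) k ^ ((φ (h N)).toNat + 2))
        atTop (𝓝 (h N * y (N + 1) ^ ((φ (h N)).toNat + 2))) :=
      tendsto_const_nhds.mul ((hy (N + 1)).pow _)
    have heq : (fun k => dudleyW φ h N (k + 1)) =
        fun k => h N * dudleyW φ h (N + 1) k ^ ((φ (h N)).toNat + 2) := by
      funext k; rfl
    rw [heq] at h1
    exact tendsto_nhds_unique h1 h2
  -- arithmetic contradiction
  refine dudley_int_false (fun N => φ (y N)) (fun N => φ (h N))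
    (fun N => (hspec N).1) ?_
  intro N
  have ht2 : (0 : ℤ) ≤ φ (h N) := le_trans (by norm_num) (hspec N).1
  have := hrel N
  calc φ (y N) = φ (h N * y (N + 1) ^ ((φ (h N)).toNat + 2)) := by rw [← this]
    _ = φ (h N) + (((φ (h N)).toNat + 2 : ℕ) : ℤ) * φ (y (N + 1)) := by
        rw [hφ, hpow]
    _ = φ (h N) + (φ (h N) + 2) * φ (y (N + 1)) := by
        rw [show (((φ (h N)).toNat + 2 : ℕ) : ℤ) = φ (h N) + 2 by
          push_cast [Int.toNat_of_nonneg ht2]; ring]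

end DudleyAux

/-- Dudley's theorem: every group homomorphism from a Polish group to the
integers (with the discrete topology) is continuous. -/
theorem dudley_continuity {G : Type*} [Group G] [TopologicalSpace G]
    [IsTopologicalGroup G] [PolishSpace G]
    (φ : G → ℤ) (hφ : ∀ a b : G, φ (a * b) = φ a + φ b) :
    Continuous φ := by
  have hone : φ 1 = 0 := by have h1 := hφ 1 1; simp only [one_mul] at h1; omega
  by_cases hd : ∀ U ∈ 𝓝 (1 : G), ∃ x ∈ U, φ x ≠ 0
  · exact absurd (dudley_discont_false φ hφ hd) (by simp)
  · push_neg at hd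
    obtain ⟨U, hU, hUzero⟩ := hd
    rw [continuous_iff_continuousAt]
    intro x
    have hU' : (fun y : G => x⁻¹ * y) ⁻¹' U ∈ 𝓝 x :=
      ((continuous_const.mul continuous_id).continuousAt
        (x := x)).preimage_mem_nhds (by simpa using hU)
    have hev : ∀ᶠ y in 𝓝 x, φ y = φ x := by
      filter_upwards [hU'] with y hy
      have h0 : φ (x⁻¹ * y) = 0 := hUzero _ hy
      have := hφ x (x⁻¹ * y)
      rw [mul_inv_cancel_left] at this
      omega
    exact (tendsto_pure.2 hev).mono_right (pure_le_nhds _)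
end

section
/- (Specker's theorem) Every group homomorphism φ from the Baer–Specker group ℤ^ℕ to ℤ is a finite integral linear combination of the coordinate projections; equivalently, Hom(ℤ^ℕ, ℤ) is a free abelian group with basis the coordinate projections, i.e. Hom(∏_{i∈ℕ} ℤ, ℤ) ≅ ⊕_{i∈ℕ} ℤ. -/
namespace SpeckerAux

noncomputable section

/-- coordinate unit vectors -/
def e (i : ℕ) : ℕ → ℤ := Pi.single i 1

def trunc (f : ℕ → ℤ) (n : ℕ) : ℕ → ℤ := fun i => if i < n then f i else 0
def tail (f : ℕ → ℤ) (n : ℕ) : ℕ → ℤ := fun i => if n ≤ i then f i else 0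

lemma trunc_add_tail (f : ℕ → ℤ) (n : ℕ) : trunc f n + tail f n = f := by
  funext i
  by_cases h : i < n
  · simp [trunc, tail, h, not_le.mpr h]
  · simp [trunc, tail, h, not_lt.mp h]

lemma e_apply (i j : ℕ) : e i j = if j = i then 1 else 0 := by
  simp [e, Pi.single_apply]

lemma map_single (φ : (ℕ → ℤ) →+ ℤ) (i : ℕ) (x : ℤ) :
    φ (Pi.single i x) = x * φ (e i) := by
  have h : Pi.single i x = x • e i := by
    funext j
    by_cases h : j = i
    · subst h; simp [e]
    · simp [e, Pi.single_apply, h]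
  rw [h, map_zsmul, smul_eq_mul]

lemma map_trunc (φ : (ℕ → ℤ) →+ ℤ) (f : ℕ → ℤ) (n : ℕ) :
    φ (trunc f n) = ∑ i ∈ Finset.range n, f i * φ (e i) := by
  induction n with
  | zero =>
    have : trunc f 0 = 0 := by funext i; simp [trunc]
    simp [this]
  | succ n ih =>
    have h : trunc f (n + 1) = trunc f n + Pi.single n (f n) := by
      funext i
      rcases lt_trichotomy i n with h1 | h1 | h1
      · simp [trunc, h1, Nat.lt_succ_of_lt h1, Pi.single_apply, Nat.ne_of_lt h1]
      · subst h1; simp [trunc, Pi.single_apply]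
      · have h2 : ¬ i < n + 1 := by omega
        have h3 : ¬ i < n := by omega
        simp [trunc, h2, h3, Pi.single_apply, Nat.ne_of_gt h1]
    rw [h, map_add, ih, map_single, Finset.sum_range_succ]

lemma tail_dvd (φ : (ℕ → ℤ) →+ ℤ) (f : ℕ → ℤ) (b : ℤ) (n : ℕ)
    (hf : ∀ i, b ^ i ∣ f i) : b ^ n ∣ φ (tail f n) := by
  have h : tail f n = b ^ n • fun i => if n ≤ i then f i / b ^ n else 0 := by
    funext i
    simp only [tail, Pi.smul_apply, smul_eq_mul]
    by_cases h : n ≤ i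
    · simp only [if_pos h]
      exact (Int.mul_ediv_cancel' ((pow_dvd_pow b h).trans (hf i))).symm
    · simp [h]
  rw [h, map_zsmul, smul_eq_mul]
  exact Dvd.intro _ rfl

lemma eq_zero_of_dvd_all_pow {x b : ℤ} (hb : 2 ≤ b) (h : ∀ n : ℕ, b ^ n ∣ x) :
    x = 0 := by
  by_contra hx
  set n := x.natAbs with hn
  have h1 : b ^ n ∣ |x| := (dvd_abs _ _).mpr (h n)
  have h2 : b ^ n ≤ |x| := Int.le_of_dvd (abs_pos.mpr hx) h1
  have h3 : (n : ℤ) < 2 ^ n := by exact_mod_cast Nat.lt_two_pow_self (n := n)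
  have h4 : (2 : ℤ) ^ n ≤ b ^ n := pow_le_pow_left₀ (by norm_num) hb n
  have h5 : |x| = (n : ℤ) := by rw [hn, Int.abs_eq_natAbs]
  omega

lemma vanish_of_dvd_pow (φ : (ℕ → ℤ) →+ ℤ) (hc : ∀ i, φ (e i) = 0)
    {b : ℤ} (hb : 2 ≤ b) (f : ℕ → ℤ) (hf : ∀ i, b ^ i ∣ f i) : φ f = 0 := by
  apply eq_zero_of_dvd_all_pow hb
  intro n
  have h := trunc_add_tail f n
  have h2 : φ f = φ (trunc f n) + φ (tail f n) := by rw [← map_add, h]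
  rw [h2, map_trunc]
  have h3 : ∑ i ∈ Finset.range n, f i * φ (e i) = 0 := by
    apply Finset.sum_eq_zero; intro i _; rw [hc i, mul_zero]
  rw [h3, zero_add]
  exact tail_dvd φ f b n hf

lemma exists_split (f : ℕ → ℤ) :
    ∃ a g : ℕ → ℤ, ∀ i, f i = 2 ^ i * a i + 3 ^ i * g i := by
  have h : ∀ i : ℕ, ∃ u v : ℤ, f i = 2 ^ i * u + 3 ^ i * v := by
    intro i
    have hcop : IsCoprime (2 ^ i : ℤ) (3 ^ i : ℤ) := by
      apply IsCoprime.pow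
      rw [Int.isCoprime_iff_gcd_eq_one]; decide
    obtain ⟨u, v, huv⟩ := hcop
    exact ⟨u * f i, v * f i, by linear_combination (- f i) * huv⟩
  choose a g hf using h
  exact ⟨a, g, hf⟩

lemma vanish (φ : (ℕ → ℤ) →+ ℤ) (hc : ∀ i, φ (e i) = 0) (f : ℕ → ℤ) :
    φ f = 0 := by
  obtain ⟨a, g, hf⟩ := exists_split f
  have h : f = (fun i => 2 ^ i * a i) + fun i => 3 ^ i * g i := by
    funext i; exact hf i
  rw [h, map_add,
    vanish_of_dvd_pow φ hc le_rfl _ (fun i => Dvd.intro _ rfl),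
    vanish_of_dvd_pow φ hc (by norm_num) _ (fun i => Dvd.intro _ rfl), add_zero]

/-! ### The recursive construction for finiteness of the support -/

section Construction

variable (c : ℕ → ℤ) (h : {i | c i ≠ 0}.Infinite)

/-- pick an element of the support larger than `b` -/
def pick (b : ℕ) : ℕ := (h.exists_gt b).choose

lemma pick_mem (b : ℕ) : c (pick c h b) ≠ 0 := (h.exists_gt b).choose_spec.1

lemma pick_gt (b : ℕ) : b < pick c h b := (h.exists_gt b).choose_spec.2

/-- `aux k = (m k, s k)`: index sequence and partial sums -/
def aux : ℕ → ℕ × ℤ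
  | 0 => (pick c h 0, 0)
  | k + 1 =>
      let p := aux k
      let s' := p.2 + 2 ^ p.1 * ((c p.1).sign * c p.1)
      (pick c h (max p.1 (2 * s' + (k + 1)).toNat), s')

def m (k : ℕ) : ℕ := (aux c h k).1
def s (k : ℕ) : ℤ := (aux c h k).2

lemma s_zero : s c h 0 = 0 := rfl

lemma s_succ (k : ℕ) :
    s c h (k + 1) = s c h k + 2 ^ m c h k * ((c (m c h k)).sign * c (m c h k)) := rfl

lemma m_succ (k : ℕ) :
    m c h (k + 1) = pick c h (max (m c h k) (2 * s c h (k + 1) + (k + 1)).toNat) := rfl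

lemma c_m_ne (k : ℕ) : c (m c h k) ≠ 0 := by
  cases k with
  | zero => exact pick_mem c h 0
  | succ k => exact pick_mem c h _

lemma sign_mul_self {a : ℤ} (ha : a ≠ 0) : a.sign * a = |a| := by
  rcases lt_trichotomy a 0 with hlt | heq | hgt
  · rw [Int.sign_eq_neg_one_of_neg hlt, abs_of_neg hlt]; ring
  · exact absurd heq ha
  · rw [Int.sign_eq_one_of_pos hgt, abs_of_pos hgt]; ring

lemma incr_pos (k : ℕ) : 1 ≤ 2 ^ m c h k * ((c (m c h k)).sign * c (m c h k)) := by
  rw [sign_mul_self (c_m_ne c h k)]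
  have h1 : (1 : ℤ) ≤ 2 ^ m c h k := one_le_pow₀ (by norm_num)
  have h2 : (1 : ℤ) ≤ |c (m c h k)| := abs_pos.mpr (c_m_ne c h k)
  nlinarith

lemma s_lt_succ (k : ℕ) : s c h k < s c h (k + 1) := by
  have := incr_pos c h k
  rw [s_succ]; omega

lemma s_nonneg (k : ℕ) : 0 ≤ s c h k := by
  induction k with
  | zero => rw [s_zero]
  | succ k ih => have := s_lt_succ c h k; omega

lemma m_lt_succ (k : ℕ) : m c h k < m c h (k + 1) := by
  rw [m_succ]
  exact lt_of_le_of_lt (le_max_left _ _) (pick_gt c h _)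

lemma m_strictMono : StrictMono (m c h) := strictMono_nat_of_lt_succ (m_lt_succ c h)

lemma two_pow_m_gt (k : ℕ) : 2 * s c h k + k < (2 : ℤ) ^ m c h k := by
  cases k with
  | zero =>
    rw [s_zero]
    have := pow_pos (show (0:ℤ) < 2 by norm_num) (m c h 0)
    omega
  | succ k =>
    have h0 : 0 ≤ 2 * s c h (k + 1) + (k + 1 : ℤ) := by
      have := s_nonneg c h (k + 1); positivity
    have h1 : (2 * s c h (k + 1) + (k + 1)).toNat < m c h (k + 1) := by
      rw [m_succ]
      exact lt_of_le_of_lt (le_max_right _ _) (pick_gt c h _)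
    have h2 : 2 * s c h (k + 1) + (k + 1 : ℤ) < (m c h (k + 1) : ℤ) := by
      have := Int.toNat_of_nonneg h0
      omega
    have h3 : (m c h (k + 1) : ℤ) < 2 ^ m c h (k + 1) := by
      exact_mod_cast Nat.lt_two_pow_self (n := m c h (k + 1))
    omega

open Classical in
/-- The bad sequence -/
def F : ℕ → ℤ := fun i => if ∃ k, m c h k = i then (c i).sign * 2 ^ i else 0

lemma F_dvd (i : ℕ) : (2 : ℤ) ^ i ∣ F c h i := by
  unfold F
  split
  · exact ⟨(c i).sign, mul_comm _ _⟩
  · exact dvd_zero _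

lemma F_eq_zero {i : ℕ} (hi : ∀ k, m c h k ≠ i) : F c h i = 0 := by
  unfold F
  rw [if_neg]
  rintro ⟨k, hk⟩; exact hi k hk

lemma F_m (k : ℕ) : F c h (m c h k) = (c (m c h k)).sign * 2 ^ m c h k := by
  unfold F
  rw [if_pos ⟨k, rfl⟩]

lemma sum_F (k : ℕ) : ∑ i ∈ Finset.range (m c h k), F c h i * c i = s c h k := by
  induction k with
  | zero =>
    rw [s_zero]
    apply Finset.sum_eq_zero
    intro i hi
    rw [Finset.mem_range] at hi
    rw [F_eq_zero c h, zero_mul]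
    intro j hj
    have := (m_strictMono c h).monotone (Nat.zero_le j)
    omega
  | succ k ih =>
    rw [Finset.range_eq_Ico, ← Finset.sum_Ico_consecutive _
      (Nat.zero_le (m c h k)) (le_of_lt (m_lt_succ c h k)), ← Finset.range_eq_Ico, ih]
    have h2 : ∑ i ∈ Finset.Ico (m c h k) (m c h (k + 1)), F c h i * c i
        = F c h (m c h k) * c (m c h k) := by
      apply Finset.sum_eq_single_of_mem
      · rw [Finset.mem_Ico]
        exact ⟨le_rfl, m_lt_succ c h k⟩
      · intro i hi hne
        rw [Finset.mem_Ico] at hi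
        rw [F_eq_zero c h, zero_mul]
        intro j hj
        rcases lt_trichotomy j (k + 1) with hj' | hj' | hj'
        · have hj'' : j ≤ k := by omega
          have := (m_strictMono c h).monotone hj''
          omega
        · subst hj'; omega
        · have := m_strictMono c h hj'
          omega
    rw [h2, F_m, s_succ]
    ring

lemma phi_F_congr (φ : (ℕ → ℤ) →+ ℤ) (hφ : ∀ i, φ (e i) = c i) (k : ℕ) :
    (2 : ℤ) ^ m c h k ∣ φ (F c h) - s c h k := by
  have h1 : φ (F c h) = φ (trunc (F c h) (m c h k)) + φ (tail (F c h) (m c h k)) := by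
    rw [← map_add, trunc_add_tail]
  have h2 : φ (trunc (F c h) (m c h k)) = s c h k := by
    rw [map_trunc, ← sum_F c h k]
    apply Finset.sum_congr rfl
    intro i _
    rw [hφ i]
  have h3 := tail_dvd φ (F c h) 2 (m c h k) (F_dvd c h)
  rw [h1, h2]
  simpa using h3

end Construction

lemma finite_support (φ : (ℕ → ℤ) →+ ℤ) : {i | φ (e i) ≠ 0}.Finite := by
  by_contra hinf
  set c : ℕ → ℤ := fun i => φ (e i) with hc
  have h : {i | c i ≠ 0}.Infinite := hinf
  set x := φ (F c h) with hx
  have key : ∀ k : ℕ, x = s c h k ∨ (k : ℤ) < |x| := by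
    intro k
    by_cases hk : x = s c h k
    · exact Or.inl hk
    · right
      have h1 := phi_F_congr c h φ (fun i => rfl) k
      have h2 : x - s c h k ≠ 0 := sub_ne_zero.mpr hk
      have h3 : (2 : ℤ) ^ m c h k ≤ |x - s c h k| :=
        Int.le_of_dvd (abs_pos.mpr h2) ((dvd_abs _ _).mpr h1)
      have h4 := two_pow_m_gt c h k
      have h5 := s_nonneg c h k
      rcases abs_cases (x - s c h k) with ⟨he, _⟩ | ⟨he, _⟩ <;>
        rcases abs_cases x with ⟨hx1, _⟩ | ⟨hx1, _⟩ <;> omega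
  have habs : |x| = ((x.natAbs : ℤ)) := Int.abs_eq_natAbs x
  have e1 := key x.natAbs
  have e2 := key (x.natAbs + 1)
  have hs := s_lt_succ c h x.natAbs
  rw [habs] at e1 e2
  push_cast at e1 e2
  omega

/-- the linear-combination map as an `AddMonoidHom` -/
def comb (c : ℕ →₀ ℤ) : (ℕ → ℤ) →+ ℤ :=
  AddMonoidHom.mk' (fun f => ∑ i ∈ c.support, c i * f i) (by
    intro f g
    simp [mul_add, Finset.sum_add_distrib])

lemma comb_e (c : ℕ →₀ ℤ) (i : ℕ) : comb c (e i) = c i := by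
  simp only [comb, AddMonoidHom.mk'_apply]
  rw [Finset.sum_congr rfl (fun j _ => by rw [e_apply])]
  simp only [mul_ite, mul_one, mul_zero]
  rw [Finset.sum_ite_eq' c.support i c]
  split
  · rfl
  · next hmem => exact (Finsupp.notMem_support_iff.mp hmem).symm

lemma comb_eq_sum (c : ℕ →₀ ℤ) (f : ℕ → ℤ) :
    comb c f = c.sum fun i a => a * f i := rfl

end
end SpeckerAux

/-- Specker's theorem: every homomorphism from the Baer–Specker group `ℤ^ℕ` to `ℤ`
is a unique finite integral linear combination of the coordinate projections;
hence `Hom(ℤ^ℕ, ℤ)` is free abelian with basis the coordinate projections. -/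
theorem specker (φ : (ℕ → ℤ) →+ ℤ) :
    ∃! c : ℕ →₀ ℤ, ∀ f : ℕ → ℤ, φ f = c.sum fun i a => a * f i := by
  classical
  obtain hfin := SpeckerAux.finite_support φ
  set c₀ : ℕ →₀ ℤ :=
    ⟨hfin.toFinset, fun i => φ (SpeckerAux.e i), fun i => by
      rw [Set.Finite.mem_toFinset]; exact Iff.rfl⟩ with hc₀
  have hc₀apply : ∀ i, c₀ i = φ (SpeckerAux.e i) := fun i => rfl
  refine ⟨c₀, ?_, ?_⟩
  · intro f
    have hψ : ∀ g, (φ - SpeckerAux.comb c₀) g = 0 := by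
      apply SpeckerAux.vanish
      intro i
      simp only [AddMonoidHom.sub_apply, SpeckerAux.comb_e, hc₀apply]
      ring
    have := hψ f
    simp only [AddMonoidHom.sub_apply, sub_eq_zero] at this
    rw [this, SpeckerAux.comb_eq_sum]
  · intro y hy
    ext i
    have h1 := hy (SpeckerAux.e i)
    rw [← SpeckerAux.comb_eq_sum, SpeckerAux.comb_e] at h1
    rw [← h1, hc₀apply]
end

section
/- Every homomorphism from the Baer–Specker group ℤ^ℕ to ℤ that vanishes on the direct sum ⊕_{i∈ℕ} ℤ (the sequences of finite support) is identically zero. -/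
/-- Key lemma: such a homomorphism kills every sequence of the form `n ↦ m^n * a n`
for `m ≥ 2`. -/
lemma specker_aux (φ : (ℕ → ℤ) →+ ℤ)
    (h : ∀ f : ℕ → ℤ, (Function.support f).Finite → φ f = 0)
    (m : ℤ) (hm : 2 ≤ m) (a : ℕ → ℤ) :
    φ (fun n => m ^ n * a n) = 0 := by
  set b : ℕ → ℤ := fun n => m ^ n * a n with hb
  have hd : ∀ N : ℕ, (m ^ N : ℤ) ∣ φ b := by
    intro N
    set c : ℕ → ℤ := fun k => if N ≤ k then m ^ (k - N) * a k else 0 with hc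
    have hsplit : b = (fun k => if N ≤ k then 0 else b k) + (m ^ N) • c := by
      funext k
      by_cases hk : N ≤ k
      · simp only [Pi.add_apply, Pi.smul_apply, hc, hk, if_pos, if_true, smul_eq_mul,
          zero_add, hb]
        rw [← mul_assoc, ← pow_add, Nat.add_sub_cancel' hk]
      · simp [hc, hk]
    have h1 : φ (fun k => if N ≤ k then 0 else b k) = 0 := by
      apply h
      apply Set.Finite.subset (Set.finite_Iio N)
      intro k hk
      simp only [Function.mem_support] at hk
      by_contra hk'
      simp only [Set.mem_Iio, not_lt] at hk'
      exact hk (if_pos hk')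
    have := map_add φ (fun k => if N ≤ k then 0 else b k) ((m ^ N) • c)
    rw [← hsplit, h1, zero_add, map_zsmul, smul_eq_mul] at this
    exact ⟨φ c, this⟩
  by_contra hne
  set x := φ b with hx
  have hN := hd x.natAbs
  have hlt : |x| < m ^ x.natAbs := by
    calc |x| = (x.natAbs : ℤ) := (Int.abs_eq_natAbs x)
    _ < 2 ^ x.natAbs := by exact_mod_cast Nat.lt_two_pow_self (n := x.natAbs)
    _ ≤ m ^ x.natAbs := pow_le_pow_left₀ (by norm_num) hm _
  have := Int.le_of_dvd (abs_pos.mpr hne) ((dvd_abs _ _).mpr hN)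
  omega

/-- A homomorphism from the Baer–Specker group `ℤ^ℕ` to `ℤ` that vanishes on all
finitely supported sequences is identically zero. -/
theorem specker_vanishing (φ : (ℕ → ℤ) →+ ℤ)
    (h : ∀ f : ℕ → ℤ, (Function.support f).Finite → φ f = 0) :
    φ = 0 := by
  ext a
  -- write `a n = 2^n * u n + 3^n * v n` using coprimality of `2^n` and `3^n`
  have key : ∀ n : ℕ, ∃ u v : ℤ, a n = 2 ^ n * u + 3 ^ n * v := by
    intro n
    have hcop : IsCoprime (2 ^ n : ℤ) (3 ^ n : ℤ) := by
      apply IsCoprime.pow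
      exact Int.isCoprime_iff_gcd_eq_one.mpr rfl
    obtain ⟨p, q, hpq⟩ := hcop
    exact ⟨p * a n, q * a n, by linear_combination (a n) * hpq.symm⟩
  choose u v huv using key
  have hsplit : a = (fun n => (2:ℤ) ^ n * u n) + (fun n => (3:ℤ) ^ n * v n) := by
    funext n; exact huv n
  rw [hsplit, map_add, specker_aux φ h 2 le_rfl u,
    specker_aux φ h 3 (by norm_num) v, AddMonoidHom.zero_apply, add_zero]
end

section
/- Let G be a Polish group, N a closed normal subgroup that contains a dense perfect subgroup, and suppose there is a homomorphism κ: A → G from an abelian group A such that the composition with the projection π: G → G/N is an isomorphism A → G/N. Then restriction along κ induces a group isomorphism Hom(G, ℤ) ≅ Hom(A, ℤ), φ ↦ φ ∘ κ. -/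
open Filter Topology

section Chain

variable {G : Type*} [Group G]

/-- finite nested-power word: `chainAux p h k m = (h m * (h (m+1) * (...)^p)^p)^p`, depth `k`. -/
def chainAux (p : ℕ) (h : ℕ → G) : ℕ → ℕ → G
  | 0, _ => 1
  | k + 1, m => (h m * chainAux p h k (m + 1)) ^ p

lemma chainAux_congr {p k : ℕ} {h h' : ℕ → G} :
    ∀ {m : ℕ}, (∀ j, m ≤ j → j < m + k → h j = h' j) →
      chainAux p h k m = chainAux p h' k m := by
  induction k with
  | zero => intro m _; rfl
  | succ k ih =>
    intro m hagree
    simp only [chainAux]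
    rw [hagree m le_rfl (by omega), ih fun j h1 h2 => hagree j (by omega) (by omega)]

/-- the word of depth `N + 1 - m` starting at index `m`. -/
def chn (p : ℕ) (h : ℕ → G) (N m : ℕ) : G := chainAux p h (N + 1 - m) m

lemma chn_of_gt {p : ℕ} {h : ℕ → G} {N m : ℕ} (hm : N < m) : chn p h N m = 1 := by
  have : N + 1 - m = 0 := by omega
  rw [chn, this]; rfl

lemma chn_rel {p : ℕ} {h : ℕ → G} {N m : ℕ} (hm : m ≤ N) :
    chn p h N m = (h m * chn p h N (m + 1)) ^ p := by
  have h1 : N + 1 - m = (N + 1 - (m + 1)) + 1 := by omega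
  rw [chn, h1]; rfl

lemma chn_congr {p N m : ℕ} {h h' : ℕ → G} (hagree : ∀ j ≤ N, h j = h' j) :
    chn p h N m = chn p h' N m := by
  apply chainAux_congr
  intro j h1 h2
  exact hagree j (by omega)

/-- if the new top entry is trivial, the extended word equals the old one. -/
lemma chn_drop {p N : ℕ} {h : ℕ → G} (h1 : h (N + 1) = 1) (m : ℕ) :
    chn p h (N + 1) m = chn p h N m := by
  rcases le_or_gt m (N + 1) with hm | hm
  · -- downward induction via k := N + 1 - m
    have key : ∀ k, chn p h (N + 1) (N + 1 - k) = chn p h N (N + 1 - k) := by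
      intro k
      induction k with
      | zero =>
        simp only [Nat.sub_zero]
        rw [chn_rel le_rfl, chn_of_gt (Nat.lt_succ_self N),
          chn_of_gt (by omega), h1, one_mul, one_pow]
      | succ k ih =>
        rcases le_or_gt (N + 1) k with hk | hk
        · have : N + 1 - (k + 1) = N + 1 - k := by omega
          rw [this]; exact ih
        · have e1 : N + 1 - (k + 1) ≤ N := by omega
          have e2 : (N + 1 - (k + 1)) + 1 = N + 1 - k := by omega
          rw [chn_rel (by omega), chn_rel e1, e2, ih]
    have := key (N + 1 - m)
    have e : N + 1 - (N + 1 - m) = m := by omega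
    rwa [e] at this
  · rw [chn_of_gt (by omega), chn_of_gt (by omega)]

variable [TopologicalSpace G] [IsTopologicalGroup G]

lemma chainAux_continuous (p : ℕ) : ∀ (k m : ℕ),
    Continuous fun h : ℕ → G => chainAux p h k m := by
  intro k
  induction k with
  | zero => intro m; simpa [chainAux] using continuous_const
  | succ k ih =>
    intro m
    simp only [chainAux]
    exact ((continuous_apply m).mul (ih (m + 1))).pow p

lemma continuous_update_right (h : ℕ → G) (i : ℕ) :
    Continuous fun x : G => Function.update h i x := by
  apply continuous_pi
  intro j
  rcases eq_or_ne j i with rfl | hj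
  · simpa [Function.update_self] using continuous_id'
  · simpa [Function.update_of_ne hj] using continuous_const

end Chain

/-- the arithmetic core. -/
lemma dudley_int_lemma (c : ℤ) (hc : c ≠ 0) (e : ℕ → ℤ)
    (he : ∀ m, e m = c + ((2 * c.natAbs + 2 : ℕ) : ℤ) * e (m + 1)) : False := by
  set p : ℤ := ((2 * c.natAbs + 2 : ℕ) : ℤ) with hp
  have hpabs : p = 2 * |c| + 2 := by
    rw [hp, Int.abs_eq_natAbs]; push_cast; ring
  have hcpos : (1 : ℤ) ≤ |c| := by
    rcases abs_pos.2 hc with h; omega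
  have hne : ∀ m, e m ≠ 0 := by
    intro m h0
    have h1 := he m
    rw [h0] at h1
    rcases eq_or_ne (e (m + 1)) 0 with h2 | h2
    · rw [h2, mul_zero, add_zero] at h1; exact hc h1.symm
    · have h3 : p * e (m + 1) = -c := by linarith
      have h4 : |p * e (m + 1)| = |c| := by rw [h3, abs_neg]
      have h5 : (1:ℤ) ≤ |e (m + 1)| := by
        rcases abs_pos.2 h2 with h; omega
      have h6 : |p * e (m + 1)| = p * |e (m + 1)| := by
        rw [abs_mul, abs_of_nonneg (by omega : (0:ℤ) ≤ p)]
      nlinarith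
  have hdesc : ∀ m, |e (m + 1)| + 1 ≤ |e m| := by
    intro m
    have h1 := he m
    have h2 : |p * e (m + 1)| ≤ |e m| + |c| := by
      have : p * e (m + 1) = e m - c := by linarith
      rw [this]
      exact abs_sub _ _
    have h5 : (1:ℤ) ≤ |e (m + 1)| := by
      rcases abs_pos.2 (hne (m + 1)) with h; omega
    have h6 : |p * e (m + 1)| = p * |e (m + 1)| := by
      rw [abs_mul, abs_of_nonneg (by omega : (0:ℤ) ≤ p)]
    nlinarith
  have key : ∀ k : ℕ, |e k| + k ≤ |e 0| := by
    intro k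
    induction k with
    | zero => simp
    | succ k ih =>
      have := hdesc k
      push_cast
      push_cast at ih
      linarith
  have h0 : (1:ℤ) ≤ |e 0| := by rcases abs_pos.2 (hne 0) with h; omega
  have := key (|e 0|).toNat
  have h7 : (((|e 0|).toNat : ℤ)) = |e 0| := Int.toNat_of_nonneg (abs_nonneg _)
  have h8 : (1:ℤ) ≤ |e ((|e 0|).toNat)| := by
    have := abs_pos.2 (hne ((|e 0|).toNat)); omega
  linarith

/-- Dudley's theorem, in the localized form we need: if a homomorphism from a Polish group
to `ℤ` takes a fixed nonzero value on points arbitrarily close to the identity, we get a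
contradiction. -/
lemma dudley_accumulation {G : Type*} [Group G] [TopologicalSpace G] [IsTopologicalGroup G]
    [PolishSpace G] (f : G →* Multiplicative ℤ) (c : ℤ) (hc : c ≠ 0)
    (hS : ∀ U ∈ 𝓝 (1 : G), ∃ x ∈ U, f x = Multiplicative.ofAdd c) : False := by
  letI := TopologicalSpace.upgradeIsCompletelyMetrizable G
  set p : ℕ := 2 * c.natAbs + 2 with hpdef
  -- step existence
  have exists_step : ∀ (hcur : ℕ → G) (N : ℕ), ∃ x : G,
      f x = Multiplicative.ofAdd c ∧ ∀ m ≤ N + 1,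
        dist (chn p (Function.update hcur (N + 1) x) (N + 1) m) (chn p hcur N m)
          ≤ (1 / 2 : ℝ) ^ N := by
    intro hcur N
    have hU : (⋂ m ∈ Set.Iic (N + 1),
        (fun x : G => chn p (Function.update hcur (N + 1) x) (N + 1) m) ⁻¹'
          Metric.closedBall (chn p hcur N m) ((1 / 2 : ℝ) ^ N)) ∈ 𝓝 (1 : G) := by
      rw [Filter.biInter_mem (Set.finite_Iic (N + 1))]
      intro m hm
      have hcont : Continuous fun x : G =>
          chn p (Function.update hcur (N + 1) x) (N + 1) m :=
        (chainAux_continuous p _ m).comp (continuous_update_right hcur (N + 1))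
      apply hcont.continuousAt.preimage_mem_nhds
      have hval : chn p (Function.update hcur (N + 1) (1 : G)) (N + 1) m
          = chn p hcur N m := by
        rw [chn_drop (Function.update_self _ _ _) m]
        exact chn_congr fun j hj => Function.update_of_ne (by omega) _ _
      rw [hval]
      exact Metric.closedBall_mem_nhds _ (by positivity)
    obtain ⟨x, hx, hfx⟩ := hS _ hU
    refine ⟨x, hfx, fun m hm => ?_⟩
    have := Set.mem_iInter₂.1 hx m hm
    simpa [Metric.mem_closedBall, dist_comm] using this
  -- base element
  obtain ⟨x₀, -, hx₀⟩ := hS Set.univ Filter.univ_mem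
  -- the recursively defined sequence of prefix functions
  let B : ℕ → (ℕ → G) := fun n => Nat.rec
    (Function.update (fun _ => (1 : G)) 0 x₀)
    (fun N prev => Function.update prev (N + 1) (Classical.choose (exists_step prev N))) n
  have hBsucc : ∀ N, B (N + 1) =
      Function.update (B N) (N + 1) (Classical.choose (exists_step (B N) N)) := fun N => rfl
  have hBstable : ∀ N k, k ≤ N → B (N + 1) k = B N k := by
    intro N k hk
    rw [hBsucc]
    exact Function.update_of_ne (by omega) _ _
  set h : ℕ → G := fun n => B n n with hhdef
  have hagree : ∀ N k, k ≤ N → h k = B N k := by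
    intro N
    induction N with
    | zero => intro k hk; interval_cases k; rfl
    | succ N ih =>
      intro k hk
      rcases Nat.lt_or_ge k (N + 1) with h1 | h1
      · rw [ih k (by omega), ← hBstable N k (by omega)]
      · have : k = N + 1 := by omega
        subst this; rfl
  have hchn : ∀ N m, chn p h N m = chn p (B N) N m := fun N m =>
    chn_congr fun j hj => hagree N j hj
  -- property (A): constant value of f
  have hA : ∀ n, f (h n) = Multiplicative.ofAdd c := by
    intro n
    cases n with
    | zero => simpa [hhdef, B] using hx₀
    | succ N =>
      have : h (N + 1) = Classical.choose (exists_step (B N) N) := by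
        show B (N + 1) (N + 1) = _
        rw [hBsucc]; exact Function.update_self _ _ _
      rw [this]
      exact (Classical.choose_spec (exists_step (B N) N)).1
  -- property (B): Cauchy estimates
  have hB : ∀ N m, m ≤ N + 1 →
      dist (chn p h (N + 1) m) (chn p h N m) ≤ (1 / 2 : ℝ) ^ N := by
    intro N m hm
    rw [hchn, hchn, hBsucc]
    exact (Classical.choose_spec (exists_step (B N) N)).2 m hm
  -- limits
  have hlim : ∀ m, ∃ wm : G, Tendsto (fun N => chn p h N m) atTop (𝓝 wm) := by
    intro m
    have hcauchy : CauchySeq fun k => chn p h (m + k) m := by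
      apply cauchySeq_of_le_geometric (1 / 2 : ℝ) 1 (by norm_num)
      intro k
      have h1 : m + (k + 1) = (m + k) + 1 := by omega
      have h2 := hB (m + k) m (by omega)
      rw [h1]
      calc dist (chn p h (m + k) m) (chn p h ((m + k) + 1) m)
          ≤ (1 / 2 : ℝ) ^ (m + k) := by rw [dist_comm]; exact h2
        _ ≤ 1 * (1 / 2 : ℝ) ^ k := by
            rw [one_mul, pow_add]
            exact mul_le_of_le_one_left (by positivity) (by
              apply pow_le_one₀ <;> norm_num)
    obtain ⟨wm, hwm⟩ := cauchySeq_tendsto_of_complete hcauchy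
    refine ⟨wm, ?_⟩
    have : Tendsto (fun k => chn p h (k + m) m) atTop (𝓝 wm) := by
      refine hwm.congr fun k => ?_
      simp [Nat.add_comm]
    exact (tendsto_add_atTop_iff_nat m).1 this
  choose w hw using hlim
  -- the recursion for w
  have hwrel : ∀ m, w m = (h m * w (m + 1)) ^ p := by
    intro m
    have t2 : Tendsto (fun N => (h m * chn p h N (m + 1)) ^ p) atTop
        (𝓝 ((h m * w (m + 1)) ^ p)) := ((hw (m + 1)).const_mul (h m)).pow p
    refine tendsto_nhds_unique (hw m) (t2.congr' ?_)
    filter_upwards [eventually_ge_atTop m] with N hN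
    exact (chn_rel hN).symm
  -- derive the integer recursion
  set a : ℕ → ℤ := fun m => Multiplicative.toAdd (f (w m)) with hadef
  have harel : ∀ m, a m = (p : ℤ) * (c + a (m + 1)) := by
    intro m
    show Multiplicative.toAdd (f (w m))
        = (p : ℤ) * (c + Multiplicative.toAdd (f (w (m + 1))))
    rw [hwrel m, map_pow, map_mul, hA m]
    simp only [toAdd_pow, toAdd_mul, toAdd_ofAdd, nsmul_eq_mul]
  exact dudley_int_lemma c hc (fun m => c + a (m + 1)) (by
    intro m
    have h9 := harel (m + 1)
    rw [hpdef] at h9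
    rw [h9])

/-- Let `G` be a Polish group, `N` a closed normal subgroup containing a dense
perfect subgroup `P` (dense in `N`), and `κ : A → G` a homomorphism from an
abelian group `A` such that `π ∘ κ : A → G/N` is an isomorphism.  Then
restriction along `κ` induces an isomorphism `Hom(G, ℤ) ≅ Hom(A, ℤ)`. -/
theorem hom_iso_of_decomposition {G A : Type*} [Group G] [TopologicalSpace G]
    [IsTopologicalGroup G] [PolishSpace G] [CommGroup A]
    (N P : Subgroup G) (hN : N.Normal) (hclosed : IsClosed (N : Set G))
    (hPN : P ≤ N) (hperf : commutator ↥P = ⊤)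
    (hdense : closure (P : Set G) = (N : Set G))
    (κ : A →* G) (hiso : Function.Bijective ((QuotientGroup.mk' N).comp κ)) :
    ∃ e : (G →* Multiplicative ℤ) ≃* (A →* Multiplicative ℤ),
      ∀ φ : G →* Multiplicative ℤ, e φ = φ.comp κ := by
  -- every homomorphism to ℤ kills P (perfectness)
  have killP : ∀ (φ : G →* Multiplicative ℤ) (x : G), x ∈ P → φ x = 1 := by
    intro φ x hx
    have hψ : commutator ↥P ≤ (φ.comp P.subtype).ker := by
      rw [commutator_def]
      rw [Subgroup.commutator_le]
      intro g _ k _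
      rw [MonoidHom.mem_ker, map_commutatorElement]
      exact commutatorElement_eq_one_iff_mul_comm.mpr (mul_comm _ _)
    have : (⟨x, hx⟩ : ↥P) ∈ (φ.comp P.subtype).ker := hψ (hperf ▸ Subgroup.mem_top _)
    simpa [MonoidHom.mem_ker] using this
  -- every homomorphism to ℤ kills N (Dudley)
  have killN : ∀ (φ : G →* Multiplicative ℤ) (g : G), g ∈ N → φ g = 1 := by
    intro φ g hg
    by_contra hne
    set c : ℤ := Multiplicative.toAdd (φ g) with hcdef
    have hc : c ≠ 0 := by
      intro h0
      apply hne
      have : φ g = Multiplicative.ofAdd c := rfl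
      rw [this, h0]; rfl
    apply dudley_accumulation φ (-c) (neg_ne_zero.2 hc)
    intro U hU
    have hgcl : g ∈ closure (P : Set G) := by rw [hdense]; exact hg
    have hW : (fun x : G => g⁻¹ * x) ⁻¹' U ∈ 𝓝 g := by
      have hc1 : ContinuousAt (fun x : G => g⁻¹ * x) g := (continuous_mul_left g⁻¹).continuousAt
      apply hc1.preimage_mem_nhds
      simpa using hU
    obtain ⟨q, hq1, hq2⟩ := mem_closure_iff_nhds.1 hgcl _ hW
    refine ⟨g⁻¹ * q, hq1, ?_⟩
    have h1 : φ q = 1 := killP φ q hq2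
    rw [map_mul, map_inv, h1, mul_one]
    have h3 : φ g = Multiplicative.ofAdd c := rfl
    rw [h3]
    rfl
  -- the isomorphism A ≃ G/N
  set ι : A ≃* (G ⧸ N) := MulEquiv.ofBijective _ hiso with hιdef
  have hι : ∀ a : A, ι a = QuotientGroup.mk' N (κ a) := fun a => rfl
  refine ⟨{ toFun := fun φ => φ.comp κ
            invFun := fun χ => (χ.comp ι.symm.toMonoidHom).comp (QuotientGroup.mk' N)
            left_inv := ?_
            right_inv := ?_
            map_mul' := ?_ }, fun φ => rfl⟩
  · intro φ
    ext g
    simp only [MonoidHom.comp_apply, MulEquiv.coe_toMonoidHom]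
    set aa : A := ι.symm (QuotientGroup.mk' N g) with haa
    have h1 : QuotientGroup.mk' N (κ aa) = QuotientGroup.mk' N g := by
      rw [← hι, haa, MulEquiv.apply_symm_apply]
    have h1' : ((g : G) : G ⧸ N) = ((κ aa : G) : G ⧸ N) := h1.symm
    have h2 : g⁻¹ * κ aa ∈ N := QuotientGroup.eq.1 h1' 
    have h3 : g = κ aa * (g⁻¹ * κ aa)⁻¹ := by group
    calc φ (κ aa) = φ (κ aa) * (φ (g⁻¹ * κ aa))⁻¹ := by
          rw [killN φ _ h2]; simp
      _ = φ (κ aa * (g⁻¹ * κ aa)⁻¹) := by simp only [map_mul, map_inv]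
      _ = φ g := (congrArg φ h3.symm)
  · intro χ
    ext a
    simp only [MonoidHom.comp_apply, MulEquiv.coe_toMonoidHom]
    rw [← hι, MulEquiv.symm_apply_apply]
  · intro φ ψ
    ext a
    simp [MonoidHom.mul_apply]
end
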